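/- Let r ≥ 3. The alternating sum h_{2r−1} = (−1)^{2r−1} Σ_{i=0}^{2r−1} (−1)^i f_{i,2r−1}, where f_{i,2r−1} is the number of faces of (M_r)^{*2}_Δ of cardinality i whose maximal containing facet has cardinality 2r−1, equals 2·(r−1)^{r−1}. In particular h_{2r−1} ≠ 0. -/

import Mathlib

/-- Independence in the matroid `M_r` (ground set `Fin r × Fin r`; `(i,j)` is `v_{i+1}^{j+1}`
for `i < r-1` and `w_{j+1}` for `i = r-1`). -/
def MrIndep (r : ℕ) (A : Finset (Fin r × Fin r)) : Prop :=
  A.card ≤ r ∧ ∀ i : Fin r, (i : ℕ) < r - 1 → (A.filter (fun p => p.1 = i)).card ≤ 1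

/-- A face of the `2`-fold deleted join `(M_r)^{*2}_Δ`. -/
def Face2 (r : ℕ) (p : Finset (Fin r × Fin r) × Finset (Fin r × Fin r)) : Prop :=
  MrIndep r p.1 ∧ MrIndep r p.2 ∧ Disjoint p.1 p.2

/-- `DegEq r p n` says the degree of the face `p` is `n`. -/
def DegEq (r : ℕ) (p : Finset (Fin r × Fin r) × Finset (Fin r × Fin r)) (n : ℕ) : Prop :=
  (∃ q, Face2 r q ∧ p.1 ⊆ q.1 ∧ p.2 ⊆ q.2 ∧ q.1.card + q.2.card = n) ∧
  (∀ q, Face2 r q → p.1 ⊆ q.1 → p.2 ⊆ q.2 → q.1.card + q.2.card ≤ n)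

/-- `f_{i,2r-1}`: the number of faces of `(M_r)^{*2}_Δ` of cardinality `i` whose maximal
containing facet has cardinality `2r-1`. -/
noncomputable def fRow (r i : ℕ) : ℕ :=
  {p : Finset (Fin r × Fin r) × Finset (Fin r × Fin r) |
    Face2 r p ∧ p.1.card + p.2.card = i ∧ DegEq r p (2 * r - 1)}.ncard

open Finset

namespace Stmt7Aux

variable (r : ℕ)

/-- The last row `W = {w_1, ..., w_r}`. -/
def Wst : Finset (Fin r × Fin r) := Finset.univ.filter (fun p => (p.1 : ℕ) = r - 1)

lemma mem_Wst (x : Fin r × Fin r) : x ∈ Wst r ↔ (x.1 : ℕ) = r - 1 := by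
  simp [Wst]

lemma Wst_card (hr : 1 ≤ r) : (Wst r).card = r := by
  have h : Wst r = {(⟨r - 1, by omega⟩ : Fin r)} ×ˢ (Finset.univ : Finset (Fin r)) := by
    ext x
    simp only [mem_Wst, Finset.mem_product, Finset.mem_singleton, Finset.mem_univ, and_true]
    rw [Fin.ext_iff]
  rw [h]
  simp

/-- The transversal finset associated to a partial choice function. -/
def Bg (g : Fin (r - 1) → Option (Fin r)) : Finset (Fin r × Fin r) :=
  Finset.univ.filterMap
    (fun i => (g i).map (fun j => (Fin.castLE (Nat.sub_le r 1) i, j)))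
    (by
      intro a a' b hb hb'
      simp only [Option.mem_def, Option.map_eq_some_iff] at hb hb'
      obtain ⟨j, _, rfl⟩ := hb
      obtain ⟨j', _, h⟩ := hb'
      rw [Prod.mk.injEq] at h
      exact (Fin.castLE_injective (Nat.sub_le r 1) h.1).symm)

lemma mem_Bg (g : Fin (r - 1) → Option (Fin r)) (x : Fin r × Fin r) :
    x ∈ Bg r g ↔ ∃ (i : Fin (r - 1)) (j : Fin r),
      g i = some j ∧ x = (Fin.castLE (Nat.sub_le r 1) i, j) := by
  simp only [Bg, Finset.mem_filterMap, Finset.mem_univ, true_and, Option.map_eq_some_iff]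
  constructor
  · rintro ⟨i, j, hj, h⟩; exact ⟨i, j, hj, h.symm⟩
  · rintro ⟨i, j, hj, h⟩; exact ⟨i, j, hj, h.symm⟩

/-- Number of chosen rows. -/
def cnt (g : Fin (r - 1) → Option (Fin r)) : ℕ :=
  (Finset.univ.filter (fun i => (g i).isSome)).card

lemma Bg_card (g : Fin (r - 1) → Option (Fin r)) : (Bg r g).card = cnt r g := by
  rw [cnt]
  symm
  apply Finset.card_bij (fun i hi =>
    ((Fin.castLE (Nat.sub_le r 1) i, (g i).get (by simpa using hi)) : Fin r × Fin r))
  · intro a ha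
    rw [mem_Bg]
    exact ⟨a, (g a).get (by simpa using ha), (Option.some_get _).symm, rfl⟩
  · intro a ha b hb h
    rw [Prod.mk.injEq] at h
    exact Fin.castLE_injective (Nat.sub_le r 1) h.1
  · intro x hx
    rw [mem_Bg] at hx
    obtain ⟨i, j, hij, rfl⟩ := hx
    refine ⟨i, by simp [hij], ?_⟩
    simp [hij]

lemma cnt_le (g : Fin (r - 1) → Option (Fin r)) : cnt r g ≤ r - 1 := by
  refine (Finset.card_filter_le _ _).trans ?_
  simp

lemma Bg_row (g : Fin (r - 1) → Option (Fin r)) {x : Fin r × Fin r} (hx : x ∈ Bg r g) :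
    (x.1 : ℕ) < r - 1 := by
  rw [mem_Bg] at hx
  obtain ⟨i, j, _, rfl⟩ := hx
  exact i.isLt

lemma MrIndep_Bg (g : Fin (r - 1) → Option (Fin r)) : MrIndep r (Bg r g) := by
  constructor
  · rw [Bg_card]
    exact (cnt_le r g).trans (Nat.sub_le r 1)
  · intro i _
    rw [Finset.card_le_one]
    intro a ha b hb
    simp only [Finset.mem_filter] at ha hb
    obtain ⟨ha1, ha2⟩ := ha
    obtain ⟨hb1, hb2⟩ := hb
    rw [mem_Bg] at ha1 hb1
    obtain ⟨ia, ja, hga, rfl⟩ := ha1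
    obtain ⟨ib, jb, hgb, rfl⟩ := hb1
    simp only at ha2 hb2
    have : ia = ib := Fin.castLE_injective _ (ha2.trans hb2.symm)
    subst this
    rw [hga] at hgb
    simp_all

lemma MrIndep_Wst (hr : 1 ≤ r) : MrIndep r (Wst r) := by
  constructor
  · rw [Wst_card r hr]
  · intro i hi
    have : (Wst r).filter (fun p => p.1 = i) = ∅ := by
      rw [Finset.filter_eq_empty_iff]
      intro x hx
      rw [mem_Wst] at hx
      intro h
      rw [h] at hx
      omega
    simp [this]

lemma disj_Wst_Bg (g : Fin (r - 1) → Option (Fin r)) : Disjoint (Wst r) (Bg r g) := by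
  rw [Finset.disjoint_left]
  intro x hx hx'
  rw [mem_Wst] at hx
  have := Bg_row r g hx'
  omega

lemma Face2_WB (hr : 1 ≤ r) (g : Fin (r - 1) → Option (Fin r)) :
    Face2 r (Wst r, Bg r g) :=
  ⟨MrIndep_Wst r hr, MrIndep_Bg r g, disj_Wst_Bg r g⟩

lemma Face2.swap {r : ℕ} {A C : Finset (Fin r × Fin r)} (h : Face2 r (A, C)) :
    Face2 r (C, A) := ⟨h.2.1, h.1, h.2.2.symm⟩

/-- Cardinality of the set of rows with index `< r - 1`. -/
lemma card_lowrows (hr : 1 ≤ r) :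
    (Finset.univ.filter (fun i : Fin r => (i : ℕ) < r - 1)).card = r - 1 := by
  have h : Finset.univ.filter (fun i : Fin r => (i : ℕ) < r - 1)
      = Finset.Iio (⟨r - 1, by omega⟩ : Fin r) := by
    ext i
    simp [Fin.lt_def]
  rw [h, Fin.card_Iio]

/-- An independent set avoiding the last row has at most `r - 1` elements. -/
lemma card_le_of_norow (hr : 1 ≤ r) (C : Finset (Fin r × Fin r)) (hC : MrIndep r C)
    (hrow : ∀ x ∈ C, (x.1 : ℕ) ≠ r - 1) : C.card ≤ r - 1 := by
  have h1 : C.card = ∑ i : Fin r, (C.filter (fun p => p.1 = i)).card :=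
    Finset.card_eq_sum_card_fiberwise (fun x _ => Finset.mem_univ x.1)
  rw [h1]
  calc ∑ i : Fin r, (C.filter (fun p => p.1 = i)).card
      ≤ ∑ i : Fin r, (if (i : ℕ) < r - 1 then 1 else 0) := by
        apply Finset.sum_le_sum
        intro i _
        by_cases h : (i : ℕ) < r - 1
        · simp only [if_pos h]
          exact hC.2 i h
        · simp only [if_neg h]
          have : C.filter (fun p => p.1 = i) = ∅ := by
            rw [Finset.filter_eq_empty_iff]
            intro x hx heq
            apply hrow x hx
            rw [heq]
            have := i.isLt
            omega
          simp [this]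
    _ = r - 1 := by
        rw [← Finset.card_filter]
        exact card_lowrows r hr

/-- Upper bound: a face whose first part contains `W` has size at most `2r - 1`. -/
lemma bound_of_W_subset (hr : 1 ≤ r) (q : Finset (Fin r × Fin r) × Finset (Fin r × Fin r))
    (hq : Face2 r q) (hW : Wst r ⊆ q.1) : q.1.card + q.2.card ≤ 2 * r - 1 := by
  have h1 : q.1.card ≤ r := hq.1.1
  have h2 : q.2.card ≤ r - 1 := by
    apply card_le_of_norow r hr _ hq.2.1
    intro x hx heq
    have hxW : x ∈ Wst r := (mem_Wst r x).2 heq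
    exact (Finset.disjoint_right.1 hq.2.2 hx) (hW hxW)
  omega

lemma degEq_WB (hr : 3 ≤ r) (g : Fin (r - 1) → Option (Fin r)) :
    DegEq r (Wst r, Bg r g) (2 * r - 1) := by
  constructor
  · refine ⟨(Wst r, Bg r (fun i => some ((g i).getD ⟨0, by omega⟩))), ?_, le_refl _, ?_, ?_⟩
    · exact Face2_WB r (by omega) _
    · intro x hx
      rw [mem_Bg] at hx ⊢
      obtain ⟨i, j, hij, rfl⟩ := hx
      exact ⟨i, j, by simp [hij], rfl⟩
    · show (Wst r).card + (Bg r _).card = 2 * r - 1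
      rw [Wst_card r (by omega), Bg_card]
      have : cnt r (fun i => some ((g i).getD ⟨0, by omega⟩)) = r - 1 := by
        unfold cnt
        simp
      rw [this]
      omega
  · intro q hq h1 _
    exact bound_of_W_subset r (by omega) q hq h1

lemma degEq_BW (hr : 3 ≤ r) (g : Fin (r - 1) → Option (Fin r)) :
    DegEq r (Bg r g, Wst r) (2 * r - 1) := by
  obtain ⟨⟨q, hq, hq1, hq2, hqc⟩, hub⟩ := degEq_WB r hr g
  have hqs : Face2 r (q.2, q.1) := Face2.swap (by exact hq)
  constructor
  · exact ⟨(q.2, q.1), hqs, hq2, hq1, by show q.2.card + q.1.card = 2 * r - 1; omega⟩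
  · intro q' hq2' h1 h2
    have h3 : q'.2.card + q'.1.card ≤ 2 * r - 1 :=
      bound_of_W_subset r (by omega) (q'.2, q'.1) (Face2.swap (by exact hq2')) h2
    omega

/-- Any independent set avoiding the last row is `Bg g` for some `g`. -/
lemma exists_Bg (C : Finset (Fin r × Fin r)) (hind : MrIndep r C)
    (hrow : ∀ x ∈ C, (x.1 : ℕ) < r - 1) : ∃ g, C = Bg r g := by
  classical
  refine ⟨fun i => if h : (C.filter (fun p => p.1 = Fin.castLE (Nat.sub_le r 1) i)).Nonempty
      then some h.choose.2 else none, ?_⟩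
  ext x
  rw [mem_Bg]
  constructor
  · intro hx
    have hlt := hrow x hx
    have hcast : Fin.castLE (Nat.sub_le r 1) (⟨(x.1 : ℕ), hlt⟩ : Fin (r - 1)) = x.1 := by
      apply Fin.ext; rfl
    have hne : (C.filter (fun p => p.1 = Fin.castLE (Nat.sub_le r 1)
        (⟨(x.1 : ℕ), hlt⟩ : Fin (r - 1)))).Nonempty := by
      refine ⟨x, ?_⟩
      rw [Finset.mem_filter, hcast]
      exact ⟨hx, rfl⟩
    refine ⟨⟨(x.1 : ℕ), hlt⟩, x.2, ?_, ?_⟩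
    · rw [dif_pos hne]
      congr 1
      have hmem := hne.choose_spec
      have hxmem : x ∈ C.filter (fun p => p.1 = Fin.castLE (Nat.sub_le r 1)
          (⟨(x.1 : ℕ), hlt⟩ : Fin (r - 1))) := by
        rw [Finset.mem_filter, hcast]; exact ⟨hx, rfl⟩
      have hcard : (C.filter (fun p => p.1 = Fin.castLE (Nat.sub_le r 1)
          (⟨(x.1 : ℕ), hlt⟩ : Fin (r - 1)))).card ≤ 1 :=
        hind.2 (Fin.castLE (Nat.sub_le r 1) (⟨(x.1 : ℕ), hlt⟩ : Fin (r - 1))) hlt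
      have : hne.choose = x := Finset.card_le_one.1 hcard _ hmem _ hxmem
      rw [this]
    · rw [hcast]
  · rintro ⟨i, j, hgi, rfl⟩
    by_cases h : (C.filter (fun p => p.1 = Fin.castLE (Nat.sub_le r 1) i)).Nonempty
    · rw [dif_pos h] at hgi
      have hmem := h.choose_spec
      rw [Finset.mem_filter] at hmem
      have : h.choose = (Fin.castLE (Nat.sub_le r 1) i, j) :=
        Prod.ext hmem.2 (Option.some_injective _ hgi)
      rw [← this]
      exact hmem.1
    · rw [dif_neg h] at hgi
      exact absurd hgi (by simp)

lemma Bg_injective : Function.Injective (Bg r) := by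
  intro g g' h
  have key : ∀ i j, g i = some j ↔ g' i = some j := by
    intro i j
    constructor
    · intro hg
      have : (Fin.castLE (Nat.sub_le r 1) i, j) ∈ Bg r g' := by
        rw [← h, mem_Bg]; exact ⟨i, j, hg, rfl⟩
      rw [mem_Bg] at this
      obtain ⟨i', j', hg', heq⟩ := this
      rw [Prod.mk.injEq] at heq
      have hi : i' = i := Fin.castLE_injective (Nat.sub_le r 1) heq.1.symm
      rw [← hi, heq.2]; exact hg'
    · intro hg
      have : (Fin.castLE (Nat.sub_le r 1) i, j) ∈ Bg r g := by
        rw [h, mem_Bg]; exact ⟨i, j, hg, rfl⟩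
      rw [mem_Bg] at this
      obtain ⟨i', j', hg', heq⟩ := this
      rw [Prod.mk.injEq] at heq
      have hi : i' = i := Fin.castLE_injective (Nat.sub_le r 1) heq.1.symm
      rw [← hi, heq.2]; exact hg'
  funext i
  cases hg : g i with
  | none =>
    cases hg' : g' i with
    | none => rfl
    | some j => exact absurd ((key i j).2 hg') (by rw [hg]; simp)
  | some j => exact ((key i j).1 hg).symm

/-- One-step extension of a face avoiding full `W` on either side. -/
lemma extend_one (hr : 3 ≤ r) (A C : Finset (Fin r × Fin r)) (h : Face2 r (A, C))
    (hA : ¬ Wst r ⊆ A) (hC : ¬ Wst r ⊆ C) (hcard : A.card < r) :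
    ∃ x, x ∉ A ∧ x ∉ C ∧ Face2 r (insert x A, C) ∧ ¬ Wst r ⊆ insert x A := by
  classical
  obtain ⟨hAind, hCind, hdisj⟩ := h
  by_cases hfull : ∀ i : Fin r, (i : ℕ) < r - 1 → (A.filter (fun p => p.1 = i)).Nonempty
  · have hAW : ∀ x ∈ A, (x.1 : ℕ) ≠ r - 1 := by
      intro x hx hxr
      have h1 : A.card = ∑ i : Fin r, (A.filter (fun p => p.1 = i)).card :=
        Finset.card_eq_sum_card_fiberwise (fun y _ => Finset.mem_univ y.1)
      have h2 : ∀ i : Fin r, 1 ≤ (A.filter (fun p => p.1 = i)).card := by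
        intro i
        rcases Nat.lt_or_ge (i : ℕ) (r - 1) with hi | hi
        · exact Finset.card_pos.2 (hfull i hi)
        · have hieq : (i : ℕ) = r - 1 := by have := i.isLt; omega
          have hxi : x.1 = i := Fin.ext (by omega)
          exact Finset.card_pos.2 ⟨x, Finset.mem_filter.2 ⟨hx, hxi⟩⟩
      have h3 : r ≤ A.card := by
        rw [h1]
        calc r = ∑ _i : Fin r, 1 := by simp
          _ ≤ _ := Finset.sum_le_sum (fun i _ => h2 i)
      omega
    obtain ⟨w, hwW, hwC⟩ := Finset.not_subset.1 hC
    have hwrow : (w.1 : ℕ) = r - 1 := (mem_Wst r w).1 hwW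
    have hwA : w ∉ A := fun hw => hAW w hw hwrow
    refine ⟨w, hwA, hwC, ⟨⟨?_, ?_⟩, hCind, ?_⟩, ?_⟩
    · rw [Finset.card_insert_of_notMem hwA]; omega
    · intro i hi
      rw [Finset.filter_insert, if_neg (by
        intro hh
        have : (w.1 : ℕ) = (i : ℕ) := congrArg Fin.val hh
        omega)]
      exact hAind.2 i hi
    · exact Finset.disjoint_insert_left.2 ⟨hwC, hdisj⟩
    · set j' : Fin r := if w.2 = (⟨0, by omega⟩ : Fin r) then ⟨1, by omega⟩ else ⟨0, by omega⟩
        with hj'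
      have hjne : j' ≠ w.2 := by
        rw [hj']
        split
        · rename_i hh
          rw [hh]
          intro hcon
          have := congrArg Fin.val hcon
          simp at this
        · rename_i hh
          intro hcon
          exact hh hcon.symm
      intro hsub
      have hw' : ((w.1, j') : Fin r × Fin r) ∈ Wst r := (mem_Wst r _).2 hwrow
      rcases Finset.mem_insert.1 (hsub hw') with heq | hmem
      · exact hjne (congrArg Prod.snd heq)
      · exact hAW _ hmem hwrow
  · push_neg at hfull
    obtain ⟨i, hi, hempty⟩ := hfull
    have hCi : (C.filter (fun p => p.1 = i)).card ≤ 1 := hCind.2 i hi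
    have hexj : ∃ j : Fin r, ((i, j) : Fin r × Fin r) ∉ C := by
      by_contra hcon
      push_neg at hcon
      have hsub : (Finset.univ.image (fun j : Fin r => ((i, j) : Fin r × Fin r)))
          ⊆ C.filter (fun p => p.1 = i) := by
        intro x hx
        simp only [Finset.mem_image, Finset.mem_univ, true_and] at hx
        obtain ⟨j, rfl⟩ := hx
        exact Finset.mem_filter.2 ⟨hcon j, rfl⟩
      have hinj : Function.Injective (fun j : Fin r => ((i, j) : Fin r × Fin r)) := by
        intro a b hab
        rw [Prod.mk.injEq] at hab
        exact hab.2
      have hcardim := Finset.card_le_card hsub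
      rw [Finset.card_image_of_injective _ hinj, Finset.card_univ, Fintype.card_fin] at hcardim
      omega
    obtain ⟨j, hjC⟩ := hexj
    have hxA : ((i, j) : Fin r × Fin r) ∉ A := by
      intro hmem
      have : ((i, j) : Fin r × Fin r) ∈ A.filter (fun p => p.1 = i) :=
        Finset.mem_filter.2 ⟨hmem, rfl⟩
      rw [hempty] at this
      exact absurd this (Finset.notMem_empty _)
    refine ⟨(i, j), hxA, hjC, ⟨⟨?_, ?_⟩, hCind, ?_⟩, ?_⟩
    · rw [Finset.card_insert_of_notMem hxA]; omega
    · intro i' hi'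
      rw [Finset.filter_insert]
      split
      · rename_i hh
        have hieq : i = i' := hh
        subst hieq
        rw [hempty]
        simp
      · exact hAind.2 i' hi'
    · exact Finset.disjoint_insert_left.2 ⟨hjC, hdisj⟩
    · intro hsub
      apply hA
      intro w hw
      rcases Finset.mem_insert.1 (hsub hw) with heq | hmem
      · exfalso
        have h1 := (mem_Wst r w).1 hw
        have h2 : (w.1 : ℕ) = (i : ℕ) := by rw [heq]
        omega
      · exact hmem

/-- Full extension: any face not containing all of `W` on either side extends to a
facet of size `2r`. -/
lemma extend_full (hr : 3 ≤ r) : ∀ n (A C : Finset (Fin r × Fin r)),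
    2 * r - (A.card + C.card) ≤ n → Face2 r (A, C) → ¬ Wst r ⊆ A → ¬ Wst r ⊆ C →
    ∃ q, Face2 r q ∧ A ⊆ q.1 ∧ C ⊆ q.2 ∧ q.1.card + q.2.card = 2 * r := by
  intro n
  induction n with
  | zero =>
    intro A C hn hf _ _
    have h1 : A.card ≤ r := hf.1.1
    have h2 : C.card ≤ r := hf.2.1.1
    exact ⟨(A, C), hf, subset_rfl, subset_rfl, by show A.card + C.card = 2 * r; omega⟩
  | succ n ih =>
    intro A C hn hf hA hC
    by_cases hlt : A.card + C.card = 2 * r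
    · exact ⟨(A, C), hf, subset_rfl, subset_rfl, hlt⟩
    · have h1 : A.card ≤ r := hf.1.1
      have h2 : C.card ≤ r := hf.2.1.1
      rcases Nat.lt_or_ge A.card r with hAc | hAc
      · obtain ⟨x, hxA, hxC, hf2, hA2⟩ := extend_one r hr A C hf hA hC hAc
        obtain ⟨q, hq, hs1, hs2, hc⟩ := ih (insert x A) C
          (by rw [Finset.card_insert_of_notMem hxA]; omega) hf2 hA2 hC
        exact ⟨q, hq, (Finset.subset_insert x A).trans hs1, hs2, hc⟩
      · have hCc : C.card < r := by omega
        obtain ⟨x, hxC, hxA, hf2, hC2⟩ :=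
          extend_one r hr C A (Face2.swap (by exact hf)) hC hA hCc
        obtain ⟨q, hq, hs1, hs2, hc⟩ := ih A (insert x C)
          (by rw [Finset.card_insert_of_notMem hxC]; omega)
          (Face2.swap (by exact hf2)) hA hC2
        exact ⟨q, hq, hs1, (Finset.subset_insert x C).trans hs2, hc⟩

/-- Characterization of faces of degree `2r - 1`. -/
lemma char (hr : 3 ≤ r) (p : Finset (Fin r × Fin r) × Finset (Fin r × Fin r)) :
    (Face2 r p ∧ DegEq r p (2 * r - 1)) ↔
      ∃ g, p = (Wst r, Bg r g) ∨ p = (Bg r g, Wst r) := by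
  constructor
  · rintro ⟨hf, _, hub⟩
    have hW : Wst r ⊆ p.1 ∨ Wst r ⊆ p.2 := by
      by_contra hcon
      push_neg at hcon
      obtain ⟨q, hq, hs1, hs2, hc⟩ :=
        extend_full r hr (2 * r) p.1 p.2 (by omega) (by exact hf) hcon.1 hcon.2
      have := hub q hq hs1 hs2
      omega
    rcases hW with hW | hW
    · have hp1 : p.1 = Wst r :=
        (Finset.eq_of_subset_of_card_le hW
          (by rw [Wst_card r (by omega)]; exact hf.1.1)).symm
      have hrow : ∀ x ∈ p.2, (x.1 : ℕ) < r - 1 := by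
        intro x hx
        rcases Nat.lt_or_ge (x.1 : ℕ) (r - 1) with h | h
        · exact h
        · exfalso
          have hxr := x.1.isLt
          have hxW : x ∈ Wst r := (mem_Wst r x).2 (by omega)
          rw [← hp1] at hxW
          exact (Finset.disjoint_left.1 hf.2.2 hxW) hx
      obtain ⟨g, hg⟩ := exists_Bg r p.2 hf.2.1 hrow
      exact ⟨g, Or.inl (Prod.ext hp1 hg)⟩
    · have hp2 : p.2 = Wst r :=
        (Finset.eq_of_subset_of_card_le hW
          (by rw [Wst_card r (by omega)]; exact hf.2.1.1)).symm
      have hrow : ∀ x ∈ p.1, (x.1 : ℕ) < r - 1 := by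
        intro x hx
        rcases Nat.lt_or_ge (x.1 : ℕ) (r - 1) with h | h
        · exact h
        · exfalso
          have hxr := x.1.isLt
          have hxW : x ∈ Wst r := (mem_Wst r x).2 (by omega)
          rw [← hp2] at hxW
          exact (Finset.disjoint_right.1 hf.2.2 hxW) hx
      obtain ⟨g, hg⟩ := exists_Bg r p.1 hf.1 hrow
      exact ⟨g, Or.inr (Prod.ext hg hp2)⟩
  · rintro ⟨g, rfl | rfl⟩
    · exact ⟨Face2_WB r (by omega) g, degEq_WB r hr g⟩
    · exact ⟨⟨MrIndep_Bg r g, MrIndep_Wst r (by omega), (disj_Wst_Bg r g).symm⟩,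
        degEq_BW r hr g⟩

lemma hface (hr : 3 ≤ r) (i : ℕ) : fRow r i =
    2 * ((Finset.univ : Finset (Fin (r - 1) → Option (Fin r))).filter
          (fun g => r + cnt r g = i)).card := by
  classical
  have hset : {p : Finset (Fin r × Fin r) × Finset (Fin r × Fin r) |
      Face2 r p ∧ p.1.card + p.2.card = i ∧ DegEq r p (2 * r - 1)} =
      ↑((((Finset.univ : Finset (Fin (r - 1) → Option (Fin r))).image
            (fun g => (Wst r, Bg r g))) ∪
         ((Finset.univ : Finset (Fin (r - 1) → Option (Fin r))).image
            (fun g => (Bg r g, Wst r)))).filter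
        (fun p => p.1.card + p.2.card = i)) := by
    ext p
    simp only [Set.mem_setOf_eq, Finset.coe_filter, Finset.mem_union, Finset.mem_image,
      Finset.mem_univ, true_and, Set.mem_setOf_eq]
    constructor
    · rintro ⟨h1, h2, h3⟩
      obtain ⟨g, hg | hg⟩ := (char r hr p).1 ⟨h1, h3⟩
      · exact ⟨Or.inl ⟨g, hg.symm⟩, h2⟩
      · exact ⟨Or.inr ⟨g, hg.symm⟩, h2⟩
    · rintro ⟨hg, h2⟩
      have hch : ∃ g, p = (Wst r, Bg r g) ∨ p = (Bg r g, Wst r) := by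
        rcases hg with ⟨g, hg⟩ | ⟨g, hg⟩
        exacts [⟨g, Or.inl hg.symm⟩, ⟨g, Or.inr hg.symm⟩]
      obtain ⟨hf, hd⟩ := (char r hr p).2 hch
      exact ⟨hf, h2, hd⟩
  rw [fRow, hset, Set.ncard_coe_finset]
  rw [Finset.filter_union, Finset.filter_image, Finset.filter_image,
    Finset.card_union_of_disjoint ?hdisj]
  case hdisj =>
    simp only [Finset.disjoint_left]
    intro p hp1 hp2
    simp only [Finset.mem_image, Finset.mem_filter] at hp1 hp2
    obtain ⟨g, _, rfl⟩ := hp1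
    obtain ⟨g2, _, hg2⟩ := hp2
    have hcard : (Wst r).card = r := Wst_card r (by omega)
    have heq1 : Bg r g2 = Wst r := congrArg Prod.fst hg2
    have h2 := congrArg Finset.card heq1
    rw [Bg_card, hcard] at h2
    have := cnt_le r g2
    omega
  rw [Finset.card_image_of_injective _ ?inj1, Finset.card_image_of_injective _ ?inj2]
  case inj1 =>
    intro a b hab
    exact Bg_injective r (congrArg Prod.snd hab)
  case inj2 =>
    intro a b hab
    exact Bg_injective r (congrArg Prod.fst hab)
  have he1 : (Finset.univ.filter
      (fun g : Fin (r - 1) → Option (Fin r) =>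
        ((Wst r, Bg r g) : Finset (Fin r × Fin r) × Finset (Fin r × Fin r)).1.card +
          (Wst r, Bg r g).2.card = i))
      = Finset.univ.filter (fun g => r + cnt r g = i) := by
    apply Finset.filter_congr
    intro g _
    show (Wst r).card + (Bg r g).card = i ↔ r + cnt r g = i
    rw [Wst_card r (by omega), Bg_card]
  have he2 : (Finset.univ.filter
      (fun g : Fin (r - 1) → Option (Fin r) =>
        ((Bg r g, Wst r) : Finset (Fin r × Fin r) × Finset (Fin r × Fin r)).1.card +
          (Bg r g, Wst r).2.card = i))
      = Finset.univ.filter (fun g => r + cnt r g = i) := by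
    apply Finset.filter_congr
    intro g _
    show (Bg r g).card + (Wst r).card = i ↔ r + cnt r g = i
    rw [Wst_card r (by omega), Bg_card]
    omega
  rw [he1, he2]
  omega

lemma main_sum (hr : 3 ≤ r) :
    (∑ i ∈ Finset.range (2 * r), (-1 : ℤ) ^ i * (fRow r i : ℤ))
      = -(2 * ((r : ℤ) - 1) ^ (r - 1)) := by
  classical
  have hstep : (∑ i ∈ Finset.range (2 * r), (-1 : ℤ) ^ i * (fRow r i : ℤ))
      = 2 * ∑ g : Fin (r - 1) → Option (Fin r), (-1 : ℤ) ^ (r + cnt r g) := by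
    have hmap : ∀ g : Fin (r - 1) → Option (Fin r), g ∈ (Finset.univ : Finset _) →
        r + cnt r g ∈ Finset.range (2 * r) := by
      intro g _
      rw [Finset.mem_range]
      have := cnt_le r g
      omega
    rw [← Finset.sum_fiberwise_of_maps_to hmap (fun g => ((-1 : ℤ)) ^ (r + cnt r g)),
      Finset.mul_sum]
    apply Finset.sum_congr rfl
    intro i _
    rw [hface r hr i]
    rw [Finset.sum_congr rfl (fun g hg => by rw [(Finset.mem_filter.1 hg).2])]
    rw [Finset.sum_const]
    push_cast
    ring
  rw [hstep]
  have hinner : (∑ o : Option (Fin r), (if o.isSome then (-1 : ℤ) else 1)) = 1 - r := by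
    rw [Fintype.sum_option]
    simp [Finset.sum_const, Fintype.card_fin]
    ring
  have hprod : (∑ g : Fin (r - 1) → Option (Fin r), (-1 : ℤ) ^ (cnt r g))
      = (1 - (r : ℤ)) ^ (r - 1) := by
    have h1 : ∀ g : Fin (r - 1) → Option (Fin r),
        ((-1 : ℤ)) ^ (cnt r g) = ∏ i : Fin (r - 1), (if (g i).isSome then (-1 : ℤ) else 1) := by
      intro g
      rw [Finset.prod_ite, Finset.prod_const, Finset.prod_const, one_pow, mul_one, cnt]
    simp_rw [h1]
    have hps := Fintype.prod_sum
      (fun (_i : Fin (r - 1)) (o : Option (Fin r)) => if o.isSome then (-1 : ℤ) else 1)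
    rw [← hps]
    calc ∏ _i : Fin (r - 1), (∑ o : Option (Fin r), (if o.isSome then (-1 : ℤ) else 1))
        = ∏ _i : Fin (r - 1), (1 - (r : ℤ)) := Finset.prod_congr rfl (fun i _ => hinner)
      _ = (1 - (r : ℤ)) ^ (r - 1) := by rw [Finset.prod_const, Finset.card_univ, Fintype.card_fin]
  simp_rw [pow_add]
  rw [← Finset.mul_sum, hprod]
  have h3 : (1 - (r : ℤ)) = -(((r : ℤ) - 1)) := by ring
  rw [h3]
  rw [show ((-(((r : ℤ) - 1))) ^ (r - 1) : ℤ) = (-1 : ℤ) ^ (r - 1) * ((r : ℤ) - 1) ^ (r - 1)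
    from neg_pow _ _]
  have h4 : (-1 : ℤ) ^ r * ((-1 : ℤ) ^ (r - 1) * ((r : ℤ) - 1) ^ (r - 1))
      = -(((r : ℤ) - 1) ^ (r - 1)) := by
    rw [← mul_assoc, ← pow_add]
    have hre : r + (r - 1) = 2 * (r - 1) + 1 := by omega
    rw [hre, pow_succ, pow_mul]
    simp
  rw [h4]
  ring

end Stmt7Aux

theorem stmt7 (r : ℕ) (hr : 3 ≤ r) :
    (-1 : ℤ) ^ (2 * r - 1) *
      (∑ i ∈ Finset.range (2 * r), (-1 : ℤ) ^ i * (fRow r i : ℤ)) =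
      2 * ((r : ℤ) - 1) ^ (r - 1) ∧
    (-1 : ℤ) ^ (2 * r - 1) *
      (∑ i ∈ Finset.range (2 * r), (-1 : ℤ) ^ i * (fRow r i : ℤ)) ≠ 0 := by
  have hodd : Odd (2 * r - 1) := ⟨r - 1, by omega⟩
  have h1 : ((-1 : ℤ)) ^ (2 * r - 1) = -1 := hodd.neg_one_pow
  rw [Stmt7Aux.main_sum r hr, h1]
  have hb : (0 : ℤ) < (r : ℤ) - 1 := by
    have : (3 : ℤ) ≤ (r : ℤ) := by exact_mod_cast hr
    linarith
  have hp := pow_pos hb (r - 1)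
  constructor
  · ring
  · intro hcon
    rw [show (-1 : ℤ) * -(2 * ((r : ℤ) - 1) ^ (r - 1)) = 2 * ((r : ℤ) - 1) ^ (r - 1)
      from by ring] at hcon
    linarith
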